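/- Local estimate for Riesz potentials of compactly supported data: if 0 < α < d, β ∈ (d−α, d], Q is an open cube with center x₀, and f is measurable with supp f ⊆ 2Q, then I_α f ∈ L¹(Q; H^β_∞) and ∫_Q |I_α f| dH^β_∞ ≤ C ℓ(Q)^β M_α f(x₀), with C = C(d,α,β). -/

import Mathlib

open MeasureTheory Set
open scoped ENNReal NNReal

set_option maxHeartbeats 1000000
noncomputable section

/-- `ℝ^d` with the Euclidean metric. -/
abbrev Rd (d : ℕ) := EuclideanSpace ℝ (Fin d)

/-- Coerce a plain function to a point of `ℝ^d`. -/
def toRd (d : ℕ) (a : Fin d → ℝ) : Rd d := WithLp.toLp 2 a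

/-- The normalization constant `ω_β = π^{β/2}/Γ(β/2+1)`. -/
def omegaConst (β : ℝ) : ℝ := Real.pi ^ (β / 2) / Real.Gamma (β / 2 + 1)

/-- The Hausdorff content `H^β_∞` in `ℝ^d`, via countable covers by balls. -/
def hContent (d : ℕ) (β : ℝ) (E : Set (Rd d)) : ℝ≥0∞ :=
  ⨅ (c : ℕ → Rd d × ℝ) (_ : E ⊆ ⋃ i, Metric.ball (c i).1 (c i).2),
    ∑' i, ENNReal.ofReal (omegaConst β * (c i).2 ^ β)

/-- The Choquet integral of a real-valued (nonnegative) function `g` over `Ω`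
with respect to a set function `H`. -/
def choquet (d : ℕ) (H : Set (Rd d) → ℝ≥0∞) (Ω : Set (Rd d)) (g : Rd d → ℝ) : ℝ≥0∞ :=
  ∫⁻ t in Set.Ioi (0 : ℝ), H {x | x ∈ Ω ∧ t < g x}

/-- The Choquet integral of an `ℝ≥0∞`-valued function `g` over `Ω`
with respect to a set function `H`. -/
def choquetE (d : ℕ) (H : Set (Rd d) → ℝ≥0∞) (Ω : Set (Rd d)) (g : Rd d → ℝ≥0∞) : ℝ≥0∞ :=
  ∫⁻ t in Set.Ioi (0 : ℝ), H {x | x ∈ Ω ∧ ENNReal.ofReal t < g x}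

/-- Closed axis-parallel cube with corner `a` and side length `l`. -/
def cubeSet (d : ℕ) (a : Fin d → ℝ) (l : ℝ) : Set (Rd d) :=
  {y | ∀ i, a i ≤ y i ∧ y i ≤ a i + l}

/-- Open axis-parallel cube with corner `a` and side length `l`. -/
def cubeO (d : ℕ) (a : Fin d → ℝ) (l : ℝ) : Set (Rd d) :=
  {y | ∀ i, a i < y i ∧ y i < a i + l}

/-- Side length of a dyadic cube of generation `k` in the lattice with unit size `l₀`. -/
def dSide (l₀ : ℝ) (k : ℤ) : ℝ := l₀ * 2 ^ k

/-- The dyadic cube, indexed by generation `k : ℤ` and position `m : Fin d → ℤ`,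
of the dyadic lattice `D(Q₀)` generated by the cube `Q₀` with corner `a₀` and
side length `l₀`. -/
def dSet (d : ℕ) (a₀ : Fin d → ℝ) (l₀ : ℝ) (Q : ℤ × (Fin d → ℤ)) : Set (Rd d) :=
  {y | ∀ i, a₀ i + dSide l₀ Q.1 * (Q.2 i : ℝ) ≤ y i ∧
        y i < a₀ i + dSide l₀ Q.1 * ((Q.2 i : ℝ) + 1)}

/-- The dyadic Hausdorff content `H^{β,Q₀}_∞`, via countable covers by dyadic cubes. -/
def dContent (d : ℕ) (β : ℝ) (a₀ : Fin d → ℝ) (l₀ : ℝ) (E : Set (Rd d)) : ℝ≥0∞ :=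
  ⨅ (c : ℕ → ℤ × (Fin d → ℤ)) (_ : E ⊆ ⋃ i, dSet d a₀ l₀ (c i)),
    ∑' i, ENNReal.ofReal (dSide l₀ (c i).1 ^ β)

/-- The dyadic maximal function associated with `H^{β,Q₀}_∞`. -/
def dMax (d : ℕ) (β : ℝ) (a₀ : Fin d → ℝ) (l₀ : ℝ) (f : Rd d → ℝ) (x : Rd d) : ℝ≥0∞ :=
  ⨆ (Q : ℤ × (Fin d → ℤ)) (_ : x ∈ dSet d a₀ l₀ Q),
    choquet d (dContent d β a₀ l₀) (dSet d a₀ l₀ Q) (fun y => |f y|)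
      / ENNReal.ofReal (dSide l₀ Q.1 ^ β)

/-- The dyadic `β`-dimensional sharp maximal function `M^{#}_{β,Q₀}`. -/
def dSharp (d : ℕ) (β : ℝ) (a₀ : Fin d → ℝ) (l₀ : ℝ) (f : Rd d → ℝ) (x : Rd d) : ℝ≥0∞ :=
  ⨆ (Q : ℤ × (Fin d → ℤ)) (_ : x ∈ dSet d a₀ l₀ Q),
    ⨅ (c : ℝ),
      choquet d (dContent d β a₀ l₀) (dSet d a₀ l₀ Q) (fun y => |f y - c|)
        / ENNReal.ofReal (dSide l₀ Q.1 ^ β)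

/-- The `β`-dimensional sharp maximal function `M^{#}_β`, over all axis-parallel cubes. -/
def sharpMax (d : ℕ) (β : ℝ) (f : Rd d → ℝ) (x : Rd d) : ℝ≥0∞ :=
  ⨆ (a : Fin d → ℝ) (l : ℝ) (_ : 0 < l) (_ : x ∈ cubeSet d a l),
    ⨅ (c : ℝ),
      choquet d (hContent d β) (cubeSet d a l) (fun y => |f y - c|) / ENNReal.ofReal (l ^ β)

/-- The `β`-dimensional maximal operator `M_{H^β_∞}` over balls. -/
def ballMax (d : ℕ) (β : ℝ) (f : Rd d → ℝ) (x : Rd d) : ℝ≥0∞ :=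
  ⨆ (r : ℝ) (_ : 0 < r),
    choquet d (hContent d β) (Metric.ball x r) (fun y => |f y|)
      / hContent d β (Metric.ball x r)

/-- The Riesz normalization constant `γ(α)`. -/
def rieszConst (d : ℕ) (α : ℝ) : ℝ :=
  Real.pi ^ ((d : ℝ) / 2) * 2 ^ α * Real.Gamma (α / 2) / Real.Gamma (((d : ℝ) - α) / 2)

/-- The Riesz potential `I_α μ` of a measure. -/
def rieszM (d : ℕ) (α : ℝ) (μ : Measure (Rd d)) (x : Rd d) : ℝ≥0∞ :=
  (ENNReal.ofReal (rieszConst d α))⁻¹ * ∫⁻ y, ENNReal.ofReal (dist x y ^ (α - (d : ℝ))) ∂μ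

/-- The (real-valued) Riesz potential `I_α f` of a function. -/
def rieszR (d : ℕ) (α : ℝ) (f : Rd d → ℝ) (x : Rd d) : ℝ :=
  (rieszConst d α)⁻¹ * ∫ y, f y * dist x y ^ (α - (d : ℝ))

/-- The fractional maximal function `M_α μ` of a measure. -/
def fracMaxM (d : ℕ) (α : ℝ) (μ : Measure (Rd d)) (x : Rd d) : ℝ≥0∞ :=
  ⨆ (a : Fin d → ℝ) (l : ℝ) (_ : 0 < l) (_ : x ∈ cubeSet d a l),
    μ (cubeSet d a l) * ENNReal.ofReal (l ^ (α - (d : ℝ)))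

/-- The fractional maximal function `M_α f` of a function. -/
def fracMaxF (d : ℕ) (α : ℝ) (f : Rd d → ℝ) (x : Rd d) : ℝ≥0∞ :=
  ⨆ (a : Fin d → ℝ) (l : ℝ) (_ : 0 < l) (_ : x ∈ cubeSet d a l),
    (∫⁻ y in cubeSet d a l, ENNReal.ofReal |f y|) * ENNReal.ofReal (l ^ (α - (d : ℝ)))

/-- The weak `L^{p,∞}(H^β_∞)` quasinorm. -/
def weakNorm (d : ℕ) (β : ℝ) (p : ℝ) (g : Rd d → ℝ≥0∞) : ℝ≥0∞ :=
  ⨆ (t : ℝ) (_ : 0 < t),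
    ENNReal.ofReal t * hContent d β {x | ENNReal.ofReal t < g x} ^ (1 / p)

/-- The local Morrey norm `‖μ‖_{M^β(Ω)}`. -/
def morreyNorm (d : ℕ) (β : ℝ) (μ : Measure (Rd d)) (Ω : Set (Rd d)) : ℝ≥0∞ :=
  ⨆ (x : Rd d) (_ : x ∈ Ω) (r : ℝ) (_ : 0 < r),
    μ (Metric.ball x r ∩ Ω) / ENNReal.ofReal (r ^ β)

/-- Generation-`k` cell at position `m` of a dyadic grid with generation offsets `o`. -/
def gcell (d : ℕ) (o : ℤ → Fin d → ℝ) (k : ℤ) (m : Fin d → ℤ) : Set (Rd d) :=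
  {y | ∀ i, o k i + 2 ^ k * (m i : ℝ) ≤ y i ∧ y i < o k i + 2 ^ k * ((m i : ℝ) + 1)}

/-- A dyadic grid in `ℝ^d`: each generation `k` consists of half-open cubes of side `2^k`
partitioning `ℝ^d`, and consecutive generations are nested. -/
structure DyadicGrid (d : ℕ) where
  o : ℤ → Fin d → ℝ
  nested : ∀ k m, ∃ m', gcell d o k m ⊆ gcell d o (k + 1) m'

/-- The dyadic Riesz potential `I^D_α μ` with respect to a dyadic grid. -/
def dyadicRiesz (d : ℕ) (G : DyadicGrid d) (α : ℝ) (μ : Measure (Rd d)) (x : Rd d) : ℝ≥0∞ :=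
  ∑' p : ℤ × (Fin d → ℤ),
    Set.indicator (gcell d G.o p.1 p.2)
      (fun _ => μ (gcell d G.o p.1 p.2) * ENNReal.ofReal (((2 : ℝ) ^ p.1) ^ (α - (d : ℝ)))) x

/-- The exponential on `ℝ≥0∞`. -/
def expE (t : ℝ≥0∞) : ℝ≥0∞ := if t = ∞ then ∞ else ENNReal.ofReal (Real.exp t.toReal)
section AuxLemmas

lemma omega_pos {β : ℝ} (hβ : 0 < β) : 0 < omegaConst β := by
  unfold omegaConst
  positivity

lemma hContent_mono {d : ℕ} {β : ℝ} {E F : Set (Rd d)} (h : E ⊆ F) :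
    hContent d β E ≤ hContent d β F := by
  unfold hContent
  exact le_iInf₂ fun c hc => iInf₂_le c (h.trans hc)

lemma hContent_le_finset_cover {d : ℕ} {β : ℝ} (hβ : β ≠ 0) {ι : Type*} (s : Finset ι)
    (p : ι → Rd d) (ρ : ι → ℝ) {E : Set (Rd d)}
    (hcov : E ⊆ ⋃ j ∈ s, Metric.ball (p j) (ρ j)) :
    hContent d β E ≤ ∑ j ∈ s, ENNReal.ofReal (omegaConst β * ρ j ^ β) := by
  classical
  set n := s.card with hn
  set e := s.equivFin with he
  set c : ℕ → Rd d × ℝ := fun i =>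
    if h : i < n then ((p (e.symm ⟨i, h⟩ : s), ρ (e.symm ⟨i, h⟩ : s))) else (0, 0) with hc
  have hcover : E ⊆ ⋃ i, Metric.ball (c i).1 (c i).2 := by
    intro x hx
    obtain ⟨j, hj, hxj⟩ := by simpa using hcov hx
    refine Set.mem_iUnion.2 ⟨(e ⟨j, hj⟩ : Fin n), ?_⟩
    have h1 : ((e ⟨j, hj⟩ : Fin n) : ℕ) < n := (e ⟨j, hj⟩).isLt
    simp only [hc, dif_pos h1]
    have h2 : (⟨((e ⟨j, hj⟩ : Fin n) : ℕ), h1⟩ : Fin n) = e ⟨j, hj⟩ := rfl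
    rw [h2, Equiv.symm_apply_apply]
    exact hxj
  refine le_trans (iInf₂_le c hcover) ?_
  have hzero : ∀ i, ¬ i < n → ENNReal.ofReal (omegaConst β * (c i).2 ^ β) = 0 := by
    intro i hi
    simp only [hc, dif_neg hi]
    simp [Real.zero_rpow hβ]
  rw [tsum_eq_sum (s := Finset.range n)
    (by intro i hi; exact hzero i (by simpa [hn] using hi))]
  have hst : ∑ j ∈ s, ENNReal.ofReal (omegaConst β * ρ j ^ β)
      = ∑ i : Fin n, ENNReal.ofReal (omegaConst β * ρ (e.symm i : ι) ^ β) := by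
    rw [← Finset.sum_attach s (fun j => ENNReal.ofReal (omegaConst β * ρ j ^ β))]
    exact (Equiv.sum_comp e.symm (fun j => ENNReal.ofReal (omegaConst β * ρ (j : ι) ^ β))).symm
  rw [hst, ← Fin.sum_univ_eq_sum_range (fun i => ENNReal.ofReal (omegaConst β * (c i).2 ^ β)) n]
  apply le_of_eq
  refine Finset.sum_congr rfl fun i _ => ?_
  simp only [hc, dif_pos i.isLt]
  rfl

lemma hContent_empty {d : ℕ} {β : ℝ} (hβ : β ≠ 0) : hContent d β (∅ : Set (Rd d)) = 0 := by
  refine le_antisymm ?_ (zero_le)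
  have := hContent_le_finset_cover (d := d) hβ (∅ : Finset ℕ) (fun _ => 0) (fun _ => 0)
    (E := ∅) (by simp)
  simpa using this

lemma hContent_le_ball {d : ℕ} {β : ℝ} (hβ : β ≠ 0) {E : Set (Rd d)} {x : Rd d} {r : ℝ}
    (h : E ⊆ Metric.ball x r) :
    hContent d β E ≤ ENNReal.ofReal (omegaConst β * r ^ β) := by
  have := hContent_le_finset_cover (d := d) hβ ({0} : Finset ℕ) (fun _ => x) (fun _ => r)
    (E := E) (by simpa using h)
  simpa using this

lemma hContent_iUnion_le {d : ℕ} {β : ℝ} (E : ℕ → Set (Rd d)) :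
    hContent d β (⋃ n, E n) ≤ ∑' n, hContent d β (E n) := by
  refine ENNReal.le_of_forall_pos_le_add fun ε hε hfin => ?_
  have hfin' : ∀ n, hContent d β (E n) ≠ ∞ := by
    intro n
    exact ne_top_of_le_ne_top hfin.ne (ENNReal.le_tsum n)
  -- choose near-optimal covers
  have hch : ∀ n : ℕ, ∃ c : ℕ → Rd d × ℝ,
      (E n ⊆ ⋃ i, Metric.ball (c i).1 (c i).2) ∧
      ∑' i, ENNReal.ofReal (omegaConst β * (c i).2 ^ β)
        ≤ hContent d β (E n) + ENNReal.ofReal ((ε : ℝ) * (1/2) ^ (n+1)) := by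
    intro n
    have hlt : hContent d β (E n) < hContent d β (E n) + ENNReal.ofReal ((ε : ℝ) * (1/2) ^ (n+1)) := by
      refine ENNReal.lt_add_right (hfin' n) ?_
      simp only [ne_eq, ENNReal.ofReal_eq_zero, not_le]
      positivity
    rw [hContent] at hlt
    rw [iInf_lt_iff] at hlt
    obtain ⟨c, hc⟩ := hlt
    rw [iInf_lt_iff] at hc
    obtain ⟨hcov, hlt'⟩ := hc
    exact ⟨c, hcov, hlt'.le⟩
  choose cc hcov hcost using hch
  -- combine via pairing
  let e : ℕ ≃ ℕ × ℕ := (Denumerable.eqv (ℕ × ℕ)).symm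
  let c : ℕ → Rd d × ℝ := fun i => cc (e i).1 (e i).2
  have hcover : (⋃ n, E n) ⊆ ⋃ i, Metric.ball (c i).1 (c i).2 := by
    intro x hx
    obtain ⟨n, hn⟩ := Set.mem_iUnion.1 hx
    obtain ⟨m, hm⟩ := Set.mem_iUnion.1 (hcov n hn)
    exact Set.mem_iUnion.2 ⟨e.symm (n, m), by simpa [c, Equiv.apply_symm_apply] using hm⟩
  refine le_trans (iInf₂_le c hcover) ?_
  have h1 : ∑' i, ENNReal.ofReal (omegaConst β * (c i).2 ^ β)
      = ∑' p : ℕ × ℕ, ENNReal.ofReal (omegaConst β * (cc p.1 p.2).2 ^ β) :=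
    e.tsum_eq (f := fun p : ℕ × ℕ => ENNReal.ofReal (omegaConst β * (cc p.1 p.2).2 ^ β))
  rw [h1, ENNReal.tsum_prod (f := fun n m => ENNReal.ofReal (omegaConst β * (cc n m).2 ^ β))]
  calc ∑' (n : ℕ), ∑' (m : ℕ), ENNReal.ofReal (omegaConst β * (cc n m).2 ^ β)
      ≤ ∑' (n : ℕ), (hContent d β (E n) + ENNReal.ofReal ((ε : ℝ) * (1/2) ^ (n+1))) :=
        ENNReal.tsum_le_tsum hcost
    _ = (∑' n, hContent d β (E n)) + ∑' (n : ℕ), ENNReal.ofReal ((ε : ℝ) * (1/2) ^ (n+1)) :=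
        ENNReal.tsum_add
    _ ≤ (∑' n, hContent d β (E n)) + ε := by
        gcongr
        have h2 : ∀ n : ℕ, ENNReal.ofReal ((ε : ℝ) * (1/2) ^ (n+1))
            = (ε : ℝ≥0∞) * ENNReal.ofReal ((1/2) ^ (n+1)) := by
          intro n
          rw [ENNReal.ofReal_mul (by positivity)]
          congr 1
          simp [ENNReal.ofReal_coe_nnreal]
        simp_rw [h2]
        rw [ENNReal.tsum_mul_left]
        nth_rewrite 2 [← mul_one (ε : ℝ≥0∞)]
        gcongr
        have h3 : ∀ n : ℕ, ENNReal.ofReal ((1/2 : ℝ) ^ (n+1)) = (1/2 : ℝ≥0∞) ^ (n+1) := by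
          intro n
          rw [ENNReal.ofReal_pow (by norm_num)]
          congr 1
          rw [ENNReal.ofReal_div_of_pos (by norm_num)]
          simp
        simp_rw [h3]
        apply le_of_eq
        calc ∑' (n : ℕ), (1/2 : ℝ≥0∞) ^ (n+1)
            = (1/2 : ℝ≥0∞) * ∑' (n : ℕ), (1/2 : ℝ≥0∞) ^ n := by
              simp_rw [pow_succ, mul_comm]
              rw [ENNReal.tsum_mul_left]
          _ = 1 := by
              rw [ENNReal.tsum_geometric]
              rw [show (1 : ℝ≥0∞) - 1/2 = 1/2 by
                rw [ENNReal.sub_eq_of_eq_add (by norm_num)]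
                rw [one_div, ← two_mul]
                exact (ENNReal.mul_inv_cancel two_ne_zero ENNReal.ofNat_ne_top).symm]
              rw [show ((1:ℝ≥0∞)/2)⁻¹ = 2 by simp]
              rw [one_div]
              exact ENNReal.inv_mul_cancel two_ne_zero ENNReal.ofNat_ne_top

lemma dist_coord_le {d : ℕ} (x y : Rd d) (i : Fin d) : dist (x i) (y i) ≤ dist x y := by
  rw [EuclideanSpace.dist_eq]
  rw [show dist (x i) (y i) = Real.sqrt (dist (x i) (y i) ^ 2) by
    rw [Real.sqrt_sq dist_nonneg]]
  apply Real.sqrt_le_sqrt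
  exact Finset.single_le_sum (f := fun j => dist (x j) (y j) ^ 2)
    (fun j _ => by positivity) (Finset.mem_univ i)

lemma dist_le_of_coord {d : ℕ} {x y : Rd d} {c : ℝ} (hc : 0 ≤ c)
    (h : ∀ i, dist (x i) (y i) ≤ c) : dist x y ≤ Real.sqrt d * c := by
  rw [EuclideanSpace.dist_eq]
  have h1 : ∑ i, dist (x i) (y i) ^ 2 ≤ (d : ℝ) * c ^ 2 := by
    calc ∑ i, dist (x i) (y i) ^ 2 ≤ ∑ _i : Fin d, c ^ 2 := by
          apply Finset.sum_le_sum
          intro i _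
          exact pow_le_pow_left₀ dist_nonneg (h i) 2
      _ = (d : ℝ) * c ^ 2 := by simp [mul_comm]
  calc Real.sqrt (∑ i, dist (x i) (y i) ^ 2) ≤ Real.sqrt ((d : ℝ) * c ^ 2) :=
        Real.sqrt_le_sqrt h1
    _ = Real.sqrt d * c := by
        rw [Real.sqrt_mul (by positivity), Real.sqrt_sq hc]

lemma coord_measurable {d : ℕ} (i : Fin d) : Measurable (fun y : Rd d => y i) := by
  have : Continuous (fun y : Rd d => y i) := by
    exact (EuclideanSpace.proj i (𝕜 := ℝ)).continuous
  exact this.measurable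

lemma cover_bound {d : ℕ} {β : ℝ} (hβ : 0 < β) {g : Rd d → ℝ≥0∞} (hg : Measurable g)
    {r τ : ℝ} (hr : 0 < r) (hτ : 0 < τ) {E : Set (Rd d)}
    (hE : ∀ x ∈ E, ENNReal.ofReal τ < ∫⁻ y in Metric.ball x r, g y) :
    hContent d β E ≤ (3^d : ℝ≥0∞) * (∫⁻ y, g y) *
      ENNReal.ofReal (omegaConst β * ((1 + Real.sqrt d) * r) ^ β) / ENNReal.ofReal τ := by
  classical
  set G := ∫⁻ y, g y with hGdef
  have hX : (0:ℝ) < omegaConst β * ((1 + Real.sqrt d) * r) ^ β := by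
    have h1 : (0:ℝ) < (1 + Real.sqrt d) * r := by positivity
    have := omega_pos hβ
    positivity
  by_cases hG : G = ∞
  · apply le_top.trans_eq
    rw [hG]
    rw [ENNReal.mul_top (by positivity), ENNReal.top_mul (by simp [hX]),
      ENNReal.top_div_of_ne_top (by simp)]
  -- cells
  set cell : (Fin d → ℤ) → Set (Rd d) :=
    fun m => {y | ∀ i, r * m i ≤ y i ∧ y i < r * (m i + 1)} with hcell
  set bigcell : (Fin d → ℤ) → Set (Rd d) :=
    fun m => {y | ∀ i, r * (m i - 1) ≤ y i ∧ y i < r * (m i + 2)} with hbigcell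
  have hbig_meas : ∀ m, MeasurableSet (bigcell m) := by
    intro m
    have : bigcell m = ⋂ i, (fun y : Rd d => y i) ⁻¹' (Ico (r * (m i - 1)) (r * (m i + 2))) := by
      ext y; simp [hbigcell, Set.mem_iInter, Set.mem_Ico, forall_and]
    rw [this]
    exact MeasurableSet.iInter fun i => (coord_measurable i) measurableSet_Ico
  set pt : (Fin d → ℤ) → Rd d :=
    fun m => if h : (E ∩ cell m).Nonempty then h.some else 0 with hpt
  set I₀ : Set (Fin d → ℤ) := {m | (E ∩ cell m).Nonempty} with hI₀
  have hptmem : ∀ m ∈ I₀, pt m ∈ E ∩ cell m := by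
    intro m hm
    have hm' : (E ∩ cell m).Nonempty := hm
    simp only [hpt]
    rw [dif_pos hm']
    exact hm'.some_mem
  -- key count
  have hcount : ∀ s : Finset (Fin d → ℤ), (↑s : Set (Fin d → ℤ)) ⊆ I₀ →
      (s.card : ℝ≥0∞) * ENNReal.ofReal τ ≤ 3^d * G := by
    intro s hs
    have h1 : ∀ m ∈ s, ENNReal.ofReal τ ≤ ∫⁻ y, (bigcell m).indicator g y := by
      intro m hm
      have hmem := hptmem m (hs hm)
      have hsub : Metric.ball (pt m) r ⊆ bigcell m := by
        intro y hy
        intro i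
        have hco : dist (y i) (pt m i) ≤ dist y (pt m) := dist_coord_le y (pt m) i
        have hlt : dist (y i) (pt m i) < r := lt_of_le_of_lt hco (Metric.mem_ball.1 hy)
        have hcm := hmem.2 i
        rw [Real.dist_eq, abs_lt] at hlt
        constructor
        · nlinarith [hcm.1, hlt.1]
        · nlinarith [hcm.2, hlt.2]
      calc ENNReal.ofReal τ ≤ ∫⁻ y in Metric.ball (pt m) r, g y := (hE _ hmem.1).le
        _ = ∫⁻ y, (Metric.ball (pt m) r).indicator g y := by
            rw [lintegral_indicator measurableSet_ball]
        _ ≤ ∫⁻ y, (bigcell m).indicator g y := by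
            apply lintegral_mono
            intro y
            exact Set.indicator_le_indicator_of_subset hsub (fun _ => zero_le) y
    have h2 : ∀ y : Rd d, ∑ m ∈ s, (bigcell m).indicator g y ≤ 3^d * g y := by
      intro y
      rw [← Finset.sum_filter_add_sum_filter_not s (fun m => y ∈ bigcell m)]
      have hz : ∑ m ∈ s.filter (fun m => ¬ y ∈ bigcell m), (bigcell m).indicator g y = 0 := by
        apply Finset.sum_eq_zero
        intro m hm
        simp only [Finset.mem_filter] at hm
        exact Set.indicator_of_notMem hm.2 g
      rw [hz, add_zero]
      have hv : ∑ m ∈ s.filter (fun m => y ∈ bigcell m), (bigcell m).indicator g y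
          = (s.filter (fun m => y ∈ bigcell m)).card * g y := by
        rw [Finset.sum_congr rfl (fun m hm => ?_), Finset.sum_const, nsmul_eq_mul]
        simp only [Finset.mem_filter] at hm
        exact Set.indicator_of_mem hm.2 g
      rw [hv]
      apply mul_le_mul_left
      have hsubf : s.filter (fun m => y ∈ bigcell m) ⊆
          Fintype.piFinset (fun i => Finset.Icc (⌊y i / r⌋ - 1) (⌊y i / r⌋ + 1)) := by
        intro m hm
        simp only [Finset.mem_filter] at hm
        rw [Fintype.mem_piFinset]
        intro i
        have h3 := hm.2 i
        rw [Finset.mem_Icc]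
        have hle : (m i : ℝ) - 1 ≤ y i / r := by
          rw [le_div_iff₀ hr]
          calc ((m i : ℝ) - 1) * r = r * (m i - 1) := by ring
            _ ≤ y i := h3.1
        have hlt2 : y i / r < (m i : ℝ) + 2 := by
          rw [div_lt_iff₀ hr]
          calc y i < r * (m i + 2) := h3.2
            _ = ((m i : ℝ) + 2) * r := by ring
        have hA : m i - 1 ≤ ⌊y i / r⌋ :=
          Int.le_floor.2 (show ((m i - 1 : ℤ) : ℝ) ≤ y i / r by push_cast; linarith)
        have hB : ⌊y i / r⌋ < m i + 2 := Int.floor_lt.2 (by push_cast; linarith)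
        omega
      calc ((s.filter (fun m => y ∈ bigcell m)).card : ℝ≥0∞)
          ≤ ((Fintype.piFinset (fun i : Fin d =>
              Finset.Icc (⌊y i / r⌋ - 1) (⌊y i / r⌋ + 1))).card : ℝ≥0∞) := by
            exact_mod_cast Nat.cast_le.2 (Finset.card_le_card hsubf)
        _ = 3^d := by
            rw [Fintype.card_piFinset]
            push_cast
            simp only [Int.card_Icc]
            simp only [show ∀ a : ℤ, (a + 1 + 1 - (a - 1)).toNat = 3 from fun a => by omega]
            norm_num
    calc (s.card : ℝ≥0∞) * ENNReal.ofReal τ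
        = ∑ _m ∈ s, ENNReal.ofReal τ := by rw [Finset.sum_const, nsmul_eq_mul]
      _ ≤ ∑ m ∈ s, ∫⁻ y, (bigcell m).indicator g y := Finset.sum_le_sum h1
      _ = ∫⁻ y, ∑ m ∈ s, (bigcell m).indicator g y := by
          rw [lintegral_finset_sum]
          intro m _
          exact hg.indicator (hbig_meas m)
      _ ≤ ∫⁻ y, 3^d * g y := lintegral_mono h2
      _ = 3^d * G := by rw [lintegral_const_mul _ hg]
  -- I₀ is finite
  have hIfin : I₀.Finite := by
    rw [← Set.not_infinite]
    intro hinf'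
    obtain ⟨n, hn⟩ := ENNReal.exists_nat_gt
      (show 3^d * G / ENNReal.ofReal τ ≠ ∞ from
        (ENNReal.div_lt_top (ENNReal.mul_ne_top (by simp) hG) (by simp [hτ])).ne)
    obtain ⟨t, ht, htc⟩ := hinf'.exists_subset_card_eq n
    have hc1 := hcount t ht
    rw [htc] at hc1
    have h5 : (n : ℝ≥0∞) ≤ 3^d * G / ENNReal.ofReal τ := by
      rw [ENNReal.le_div_iff_mul_le (Or.inl (by simp [hτ])) (Or.inl (by simp))]
      exact hc1
    exact absurd h5 (not_le.2 hn)
  set I : Finset (Fin d → ℤ) := hIfin.toFinset with hI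
  have hIsub : (↑I : Set (Fin d → ℤ)) ⊆ I₀ := by simp [hI]
  -- cover E by balls centered at the chosen points
  have hcov2 : E ⊆ ⋃ m ∈ I, Metric.ball (pt m) ((1 + Real.sqrt d) * r) := by
    intro x hx
    set m₀ : Fin d → ℤ := fun i => ⌊x i / r⌋ with hm₀
    have hxc : x ∈ cell m₀ := by
      intro i
      have hf1 : (m₀ i : ℝ) ≤ x i / r := Int.floor_le _
      have hf2 : x i / r < (m₀ i : ℝ) + 1 := Int.lt_floor_add_one _
      constructor
      · rw [mul_comm]
        exact (le_div_iff₀ hr).mp hf1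
      · rw [mul_comm]
        exact (div_lt_iff₀ hr).mp hf2
    have hm₀I : m₀ ∈ I₀ := ⟨x, hx, hxc⟩
    have hptm := hptmem m₀ hm₀I
    refine Set.mem_biUnion (show m₀ ∈ I by simp [hI, hI₀]; exact hm₀I) ?_
    rw [Metric.mem_ball]
    have hcb : ∀ i, dist (x i) (pt m₀ i) ≤ r := by
      intro i
      have h6 := hxc i
      have h7 := hptm.2 i
      rw [Real.dist_eq, abs_le]
      constructor <;> nlinarith [h6.1, h6.2, h7.1, h7.2]
    have hsd : (0:ℝ) ≤ Real.sqrt d := Real.sqrt_nonneg _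
    calc dist x (pt m₀) ≤ Real.sqrt d * r := dist_le_of_coord hr.le hcb
      _ < (1 + Real.sqrt d) * r := by nlinarith
  have hmain := hContent_le_finset_cover (d := d) (ne_of_gt hβ) I pt
    (fun _ => (1 + Real.sqrt d) * r) hcov2
  refine hmain.trans ?_
  rw [Finset.sum_const, nsmul_eq_mul]
  have hcard : (I.card : ℝ≥0∞) ≤ 3^d * G / ENNReal.ofReal τ := by
    rw [ENNReal.le_div_iff_mul_le (Or.inl (by simp [hτ])) (Or.inl (by simp))]
    exact hcount I hIsub
  calc (I.card : ℝ≥0∞) * ENNReal.ofReal (omegaConst β * ((1 + Real.sqrt d) * r) ^ β)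
      ≤ (3^d * G / ENNReal.ofReal τ) * ENNReal.ofReal (omegaConst β * ((1 + Real.sqrt d) * r) ^ β) :=
        mul_le_mul_left hcard _
    _ = 3^d * G * ENNReal.ofReal (omegaConst β * ((1 + Real.sqrt d) * r) ^ β) / ENNReal.ofReal τ := by
        rw [div_eq_mul_inv, div_eq_mul_inv, mul_right_comm]

lemma rieszConst_pos {d : ℕ} {α : ℝ} (hα : 0 < α) (hαd : α < d) : 0 < rieszConst d α := by
  unfold rieszConst
  have h1 : 0 < Real.Gamma (α / 2) := Real.Gamma_pos_of_pos (by linarith)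
  have h2 : 0 < Real.Gamma (((d : ℝ) - α) / 2) := Real.Gamma_pos_of_pos (by linarith)
  have h3 : (0:ℝ) < Real.pi ^ ((d : ℝ) / 2) := Real.rpow_pos_of_pos Real.pi_pos _
  have h4 : (0:ℝ) < (2:ℝ) ^ α := Real.rpow_pos_of_pos (by norm_num) _
  positivity

lemma min_le_rpow_interp {a b lam : ℝ} (ha : 0 ≤ a) (hb : 0 ≤ b) (hl0 : 0 ≤ lam)
    (hl1 : lam ≤ 1) : min a b ≤ a ^ (1 - lam) * b ^ lam := by
  rcases le_total a b with h | h
  · calc min a b ≤ a := min_le_left _ _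
      _ = a ^ (1 - lam) * a ^ lam := by
          rw [← Real.rpow_add' ha (by norm_num)]
          simp
      _ ≤ a ^ (1 - lam) * b ^ lam := by
          apply mul_le_mul_of_nonneg_left _ (Real.rpow_nonneg ha _)
          exact Real.rpow_le_rpow ha h hl0
  · calc min a b ≤ b := min_le_right _ _
      _ = b ^ (1 - lam) * b ^ lam := by
          rw [← Real.rpow_add' hb (by norm_num)]
          simp
      _ ≤ a ^ (1 - lam) * b ^ lam := by
          apply mul_le_mul_of_nonneg_right _ (Real.rpow_nonneg hb _)
          exact Real.rpow_le_rpow hb h (by linarith)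

lemma lint_rpow {c T lam : ℝ} (hc : 0 ≤ c) (hT : 0 ≤ T) (hl0 : 0 < lam) (hl1 : lam < 1) :
    ∫⁻ t in Set.Ioc (0:ℝ) T, ENNReal.ofReal (c * t ^ (-lam))
      ≤ ENNReal.ofReal (c * T ^ (1 - lam) / (1 - lam)) := by
  have hint : IntegrableOn (fun t : ℝ => c * t ^ (-lam)) (Set.Ioc 0 T) := by
    apply Integrable.const_mul
    have h := intervalIntegral.intervalIntegrable_rpow' (a := 0) (b := T) (r := -lam)
      (by linarith)
    rw [intervalIntegrable_iff] at h
    rwa [Set.uIoc_of_le hT] at h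
  rw [← ofReal_integral_eq_lintegral_ofReal hint]
  · apply ENNReal.ofReal_le_ofReal
    rw [MeasureTheory.integral_const_mul]
    rw [← intervalIntegral.integral_of_le hT]
    rw [integral_rpow (Or.inl (by linarith))]
    rw [Real.zero_rpow (ne_of_gt (by linarith))]
    rw [show -lam + 1 = 1 - lam by ring]
    rw [sub_zero, mul_div_assoc]
  · filter_upwards [MeasureTheory.self_mem_ae_restrict (measurableSet_Ioc)] with t ht
    have : (0:ℝ) < t := ht.1
    positivity

lemma exists_annulus {D s : ℝ} (hs : 0 < s) (hsD : s < D) :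
    ∃ k : ℕ, D * (1/2)^(k+1) ≤ s ∧ s < D * (1/2)^k := by
  have hD : 0 < D := lt_trans hs hsD
  have hu : 1 < D / s := (one_lt_div hs).2 hsD
  obtain ⟨n, hn⟩ := pow_unbounded_of_one_lt (D / s) (by norm_num : (1:ℝ) < 2)
  -- minimal n with D / s ≤ 2 ^ n
  have hex : ∃ n : ℕ, D / s ≤ 2 ^ n := ⟨n, hn.le⟩
  classical
  set n₀ := Nat.find hex with hn₀
  have hfind := Nat.find_spec hex
  have hn₀pos : 0 < n₀ := by
    rcases Nat.eq_zero_or_pos n₀ with h | h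
    · exfalso
      have := hfind
      rw [← hn₀] at this
      rw [h] at this
      simp at this
      linarith
    · exact h
  set k := n₀ - 1 with hk
  have hkk : k + 1 = n₀ := by omega
  have hnot : ¬ (D / s ≤ 2 ^ k) := Nat.find_min hex (by omega)
  push_neg at hnot
  refine ⟨k, ?_, ?_⟩
  · rw [div_pow, one_pow, mul_one_div, div_le_iff₀ (by positivity)]
    rw [div_le_iff₀ hs] at hfind
    calc D ≤ 2 ^ Nat.find hex * s := hfind
      _ = s * 2 ^ (k+1) := by rw [hkk, hn₀, mul_comm]
  · rw [div_pow, one_pow, mul_one_div, lt_div_iff₀ (by positivity)]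
    rw [lt_div_iff₀ hs] at hnot
    linarith [hnot]

end AuxLemmas

/-- Local estimate for Riesz potentials of data supported in the doubled cube. -/
theorem riesz_local_estimate (d : ℕ) (α β : ℝ) (hα : 0 < α) (hαd : α < d)
    (hβ : (d : ℝ) - α < β) (hβd : β ≤ d) :
    ∃ C : ℝ, 0 < C ∧
      ∀ (a : Fin d → ℝ) (l : ℝ), 0 < l →
        ∀ f : Rd d → ℝ, Measurable f →
          Function.support f ⊆ cubeO d (fun i => a i - l / 2) (2 * l) →
          choquet d (hContent d β) (cubeO d a l) (fun y => |rieszR d α f y|) ≤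
            ENNReal.ofReal (C * l ^ β) * fracMaxF d α f (toRd d fun i => a i + l / 2) := by
  classical
  have hd : (0:ℝ) < d := lt_trans hα hαd
  have hβ0 : (0:ℝ) < β := lt_of_le_of_lt (by linarith) hβ
  set γ := rieszConst d α with hγdef
  have hγ : 0 < γ := rieszConst_pos hα hαd
  set ω := omegaConst β with hωdef
  have hω : 0 < ω := omega_pos hβ0
  set dd := Real.sqrt d with hastd
  have hdd : 0 < dd := Real.sqrt_pos.2 hd
  set lam : ℝ := (1 + ((d:ℝ) - α)/β)/2 with hlamdef
  have hfrac1 : ((d:ℝ) - α)/β < 1 := by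
    rw [div_lt_one hβ0]; linarith
  have hfrac0 : 0 < ((d:ℝ) - α)/β := div_pos (by linarith) hβ0
  have hlam0 : 0 < lam := by rw [hlamdef]; linarith
  have hlam1 : lam < 1 := by rw [hlamdef]; linarith
  set e : ℝ := lam*β + α - d with hedef
  have he : 0 < e := by
    have : lam * β = (β + ((d:ℝ)-α))/2 := by
      rw [hlamdef]; field_simp
    rw [hedef, this]; linarith
  set q : ℝ := (1/2:ℝ) ^ (e/2) with hqdef
  have hq0 : 0 < q := Real.rpow_pos_of_pos (by norm_num) _
  have hq1 : q < 1 := Real.rpow_lt_one (by norm_num) (by norm_num) (by linarith)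
  have hq1' : 0 < 1 - q := by linarith
  set cA : ℝ := 3^d * ω * (1+dd)^β * (2:ℝ)^((d:ℝ)-α) / γ with hcAdef
  set cB : ℝ := (2:ℝ)^((d:ℝ)-α) / γ with hcBdef
  have h2pow : (0:ℝ) < (2:ℝ)^((d:ℝ)-α) := Real.rpow_pos_of_pos (by norm_num) _
  have hcA : 0 < cA := by
    rw [hcAdef]
    have h3 : (0:ℝ) < 3^d := by positivity
    have h4 : (0:ℝ) < (1+dd)^β := Real.rpow_pos_of_pos (by linarith) _
    positivity
  have hcB : 0 < cB := by rw [hcBdef]; positivity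
  set C := ω^(1-lam) * dd^(β*(1-lam)) * cA^lam * cB^(1-lam) * (2*dd)^e
      / ((1-lam)*(1-q)^2) * (2:ℝ)^((d:ℝ)-α) with hCdef
  have hC : 0 < C := by
    have h5 : (0:ℝ) < ω^(1-lam) := Real.rpow_pos_of_pos hω _
    have h6 : (0:ℝ) < dd^(β*(1-lam)) := Real.rpow_pos_of_pos hdd _
    have h7 : (0:ℝ) < cA^lam := Real.rpow_pos_of_pos hcA _
    have h8 : (0:ℝ) < cB^(1-lam) := Real.rpow_pos_of_pos hcB _
    have h9 : (0:ℝ) < (2*dd)^e := Real.rpow_pos_of_pos (by linarith) _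
    have h10 : (0:ℝ) < 1 - lam := by linarith
    rw [hCdef]
    positivity
  refine ⟨C, hC, ?_⟩
  intro a l hl f hf hsupp
  set x₀ : Rd d := toRd d (fun i => a i + l/2) with hx₀def
  set Q : Set (Rd d) := cubeO d a l with hQdef
  set M := fracMaxF d α f x₀ with hMdef
  set g : Rd d → ℝ≥0∞ := fun y => ENNReal.ofReal |f y| with hgdef
  have hmeasg : Measurable g := hf.abs.ennreal_ofReal
  set F : ℝ≥0∞ := ∫⁻ y, g y with hFdef
  set bigQ := cubeSet d (fun i => a i - l/2) (2*l) with hbigQdef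
  have hbigQmeas : MeasurableSet bigQ := by
    have : bigQ = ⋂ i, (fun y : Rd d => y i) ⁻¹' (Icc ((fun i => a i - l/2) i) (a i - l/2 + 2*l)) := by
      ext y
      simp only [hbigQdef, cubeSet, Set.mem_iInter, Set.mem_preimage, Set.mem_Icc, Set.mem_setOf_eq]
    rw [this]
    exact MeasurableSet.iInter fun i => (coord_measurable i) measurableSet_Icc
  have hsuppg : Function.support g ⊆ bigQ := by
    intro y hy
    have : f y ≠ 0 := by
      intro h0
      apply hy
      simp [hgdef, h0]
    have hmem := hsupp this
    intro i
    have := hmem i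
    constructor <;> [linarith [this.1]; linarith [this.2]]
  have hFM : F * ENNReal.ofReal ((2*l)^(α-(d:ℝ))) ≤ M := by
    have hFeq : F = ∫⁻ y in bigQ, g y := by
      rw [hFdef, ← lintegral_indicator hbigQmeas, Set.indicator_eq_self.2 hsuppg]
    have hx₀mem : x₀ ∈ cubeSet d (fun i => a i - l/2) (2*l) := by
      intro i
      constructor
      · show a i - l/2 ≤ a i + l/2
        linarith
      · show a i + l/2 ≤ a i - l/2 + 2*l
        linarith
    rw [hFeq, hMdef, fracMaxF]
    refine le_iSup_of_le (fun i => a i - l/2) (le_iSup_of_le (2*l)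
      (le_iSup_of_le (by linarith) (le_iSup_of_le hx₀mem le_rfl)))
  by_cases hM : M = ⊤
  · rw [hM, ENNReal.mul_top]
    · exact le_top
    · simp only [ne_eq, ENNReal.ofReal_eq_zero, not_le]
      have : (0:ℝ) < l ^ β := Real.rpow_pos_of_pos hl _
      positivity
  have hFfin : F ≠ ⊤ := by
    intro hFtop
    apply hM
    rw [eq_top_iff]
    calc M ≥ F * ENNReal.ofReal ((2*l)^(α-(d:ℝ))) := hFM
      _ = ⊤ := by
          rw [hFtop, ENNReal.top_mul]
          simp only [ne_eq, ENNReal.ofReal_eq_zero, not_le]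
          exact Real.rpow_pos_of_pos (by linarith) _
  set F_r := F.toReal with hFrdef
  have hFr0 : 0 ≤ F_r := ENNReal.toReal_nonneg
  have hFF : F = ENNReal.ofReal F_r := (ENNReal.ofReal_toReal hFfin).symm
  -- geometry
  set D : ℝ := 2*l*dd with hDdef
  have hD : 0 < D := by positivity
  set rk : ℕ → ℝ := fun k => D * (1/2)^k with hrkdef
  have hrk0 : ∀ k, 0 < rk k := fun k => by
    have : (0:ℝ) < (1/2:ℝ)^k := by positivity
    exact mul_pos hD this
  have hdistQ : ∀ x ∈ Q, ∀ y : Rd d, f y ≠ 0 → dist x y < D := by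
    intro x hx y hy
    have hmem := hsupp hy
    have hcb : ∀ i, dist (x i) (y i) ≤ 3*l/2 := by
      intro i
      have h1 := (hx : x ∈ cubeO d a l) i
      have h2 := hmem i
      simp only [cubeO, Set.mem_setOf_eq] at h1 h2
      rw [Real.dist_eq, abs_le]
      constructor <;> [linarith [h1.1, h2.2]; linarith [h1.2, h2.1]]
    calc dist x y ≤ dd * (3*l/2) := dist_le_of_coord (by linarith) hcb
      _ < 2*l*dd := by nlinarith
  have hQball : Q ⊆ Metric.ball x₀ (l * dd) := by
    intro x hx
    rw [Metric.mem_ball]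
    have hcb : ∀ i, dist (x i) (x₀ i) ≤ l/2 := by
      intro i
      have h1 := (hx : x ∈ cubeO d a l) i
      have h2 : x₀ i = a i + l/2 := rfl
      rw [Real.dist_eq, h2, abs_le]
      constructor <;> [linarith [h1.1]; linarith [h1.2]]
    calc dist x x₀ ≤ dd * (l/2) := dist_le_of_coord (by linarith) hcb
      _ < l * dd := by nlinarith
  set K : ℝ := ω * (l*dd)^β with hKdef
  have hK0 : 0 ≤ K := by
    have : (0:ℝ) < (l*dd)^β := Real.rpow_pos_of_pos (by positivity) _
    rw [hKdef]; positivity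
  have hHK : ∀ E : Set (Rd d), E ⊆ Q → hContent d β E ≤ ENNReal.ofReal K := by
    intro E hE
    exact hContent_le_ball (ne_of_gt hβ0) (hE.trans hQball)
  -- weights
  set θ : ℕ → ℝ := fun k => (1-q)*q^k with hθdef
  have hθ0 : ∀ k, 0 < θ k := fun k => mul_pos hq1' (by positivity)
  -- the localized averages
  set Hk : ℕ → Rd d → ℝ≥0∞ := fun k x =>
    ENNReal.ofReal ((rk k/2)^(α-(d:ℝ))) * ∫⁻ y in Metric.ball x (rk k), g y with hHkdef
  -- kernel domination
  have hker : ∀ x ∈ Q, (∫⁻ y, g y * ENNReal.ofReal (dist x y ^ (α-(d:ℝ)))) ≤ ∑' k, Hk k x := by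
    intro x hx
    have hptw : ∀ y : Rd d, g y * ENNReal.ofReal (dist x y ^ (α-(d:ℝ)))
        ≤ ∑' k, (Metric.ball x (rk k)).indicator
            (fun y => ENNReal.ofReal ((rk k/2)^(α-(d:ℝ))) * g y) y := by
      intro y
      by_cases hfy : f y = 0
      · have : g y = 0 := by simp [hgdef, hfy]
        rw [this, zero_mul]
        exact zero_le
      by_cases hdist0 : dist x y = 0
      · rw [hdist0, Real.zero_rpow (by intro h; linarith [hαd]), ENNReal.ofReal_zero, mul_zero]
        exact zero_le
      have hdpos : 0 < dist x y := lt_of_le_of_ne dist_nonneg (Ne.symm hdist0)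
      obtain ⟨k, hk1, hk2⟩ := exists_annulus hdpos (hdistQ x hx y hfy)
      refine le_trans ?_ (ENNReal.le_tsum k)
      have hmemball : y ∈ Metric.ball x (rk k) := by
        rw [Metric.mem_ball, dist_comm]
        exact hk2
      rw [Set.indicator_of_mem hmemball]
      rw [mul_comm]
      apply mul_le_mul_left
      apply ENNReal.ofReal_le_ofReal
      have hhalf : rk k / 2 = D * (1/2)^(k+1) := by
        rw [hrkdef]
        rw [pow_succ]
        ring
      rw [hhalf]
      apply Real.rpow_le_rpow_of_nonpos (by positivity) hk1 (by linarith)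
    calc (∫⁻ y, g y * ENNReal.ofReal (dist x y ^ (α-(d:ℝ))))
        ≤ ∫⁻ y, ∑' k, (Metric.ball x (rk k)).indicator
            (fun y => ENNReal.ofReal ((rk k/2)^(α-(d:ℝ))) * g y) y := lintegral_mono hptw
      _ = ∑' k, ∫⁻ y, (Metric.ball x (rk k)).indicator
            (fun y => ENNReal.ofReal ((rk k/2)^(α-(d:ℝ))) * g y) y := by
          apply lintegral_tsum
          intro k
          exact ((hmeasg.const_mul _).indicator measurableSet_ball).aemeasurable
      _ = ∑' k, Hk k x := by
          congr 1
          funext k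
          rw [lintegral_indicator measurableSet_ball, hHkdef]
          exact lintegral_const_mul _ hmeasg
  -- pointwise level-set inclusion
  have hsumθ : Summable (fun k : ℕ => θ k) := by
    apply Summable.mul_left
    exact summable_geometric_of_lt_one hq0.le hq1
  have hθsum : ∑' k, θ k = 1 := by
    rw [hθdef]
    simp only []
    rw [tsum_mul_left, tsum_geometric_of_lt_one hq0.le hq1]
    field_simp
  have hincl : ∀ t : ℝ, 0 < t →
      {x | x ∈ Q ∧ t < |rieszR d α f x|} ⊆
        ⋃ k : ℕ, {x | x ∈ Q ∧ ENNReal.ofReal (γ * θ k * t) < Hk k x} := by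
    intro t ht x hxS
    obtain ⟨hxQ, hxt⟩ := hxS
    by_contra hcon
    rw [Set.mem_iUnion] at hcon
    push_neg at hcon
    have hcon' : ∀ k : ℕ, Hk k x ≤ ENNReal.ofReal (γ * θ k * t) := by
      intro k
      have := hcon k
      simp only [Set.mem_setOf_eq, not_and, not_lt] at this
      exact this hxQ
    set L : ℝ≥0∞ := ∫⁻ y, g y * ENNReal.ofReal (dist x y ^ (α-(d:ℝ))) with hLdef
    have hL1 : L ≤ ENNReal.ofReal (γ * t) := by
      calc L ≤ ∑' k, Hk k x := hker x hxQ
        _ ≤ ∑' k, ENNReal.ofReal (γ * θ k * t) := ENNReal.tsum_le_tsum hcon'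
        _ = ENNReal.ofReal (∑' k, γ * θ k * t) := by
            rw [ENNReal.ofReal_tsum_of_nonneg]
            · intro k
              have := hθ0 k
              positivity
            · have : (fun k => γ * θ k * t) = fun k => (γ * t) * θ k := by
                funext k; ring
              rw [this]
              exact hsumθ.mul_left _
        _ = ENNReal.ofReal (γ * t) := by
            congr 1
            have : (fun k => γ * θ k * t) = fun k => (γ * t) * θ k := by
              funext k; ring
            rw [this, tsum_mul_left, hθsum, mul_one]
    have hL2 : γ * t < L.toReal := by
      have habs : |rieszR d α f x| ≤ γ⁻¹ * L.toReal := by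
        rw [rieszR, ← hγdef, abs_mul, abs_of_nonneg (by positivity : (0:ℝ) ≤ γ⁻¹)]
        apply mul_le_mul_of_nonneg_left _ (by positivity : (0:ℝ) ≤ γ⁻¹)
        calc |∫ y, f y * dist x y ^ (α-(d:ℝ))|
            ≤ (∫⁻ y, ENNReal.ofReal ‖f y * dist x y ^ (α-(d:ℝ))‖).toReal := by
              rw [← Real.norm_eq_abs]
              exact MeasureTheory.norm_integral_le_lintegral_norm _
          _ = L.toReal := by
              congr 1
              rw [hLdef]
              congr 1
              funext y
              rw [Real.norm_eq_abs, abs_mul,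
                abs_of_nonneg (Real.rpow_nonneg dist_nonneg _),
                ENNReal.ofReal_mul (abs_nonneg _)]
      have h1 : t < γ⁻¹ * L.toReal := lt_of_lt_of_le hxt habs
      calc γ * t < γ * (γ⁻¹ * L.toReal) := by
            apply mul_lt_mul_of_pos_left h1 hγ
        _ = L.toReal := by field_simp
    have hL3 : L.toReal ≤ γ * t := by
      have := ENNReal.toReal_mono (by simp) hL1
      rwa [ENNReal.toReal_ofReal (by positivity)] at this
    linarith
  set A : ℕ → ℝ → Set (Rd d) := fun k t => {x | x ∈ Q ∧ ENNReal.ofReal (γ * θ k * t) < Hk k x}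
    with hAdef
  have hAmono : ∀ k, Antitone (fun t => hContent d β (A k t)) := by
    intro k t t' htt'
    apply hContent_mono
    intro x hx
    exact ⟨hx.1, lt_of_le_of_lt (ENNReal.ofReal_le_ofReal (by nlinarith [ (hθ0 k), hγ, mul_le_mul_of_nonneg_left htt' (le_of_lt (mul_pos hγ (hθ0 k)))])) hx.2⟩
  -- quantities for the per-scale estimates
  set T2 : ℕ → ℝ := fun k => (rk k/2)^(α-(d:ℝ)) * F_r / (γ * θ k) with hT2def
  set Wk : ℕ → ℝ := fun k =>
    3^d * F_r * (ω * ((1+dd)*rk k)^β) / (γ * θ k * (rk k/2)^((d:ℝ)-α)) with hWkdef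
  set ck : ℕ → ℝ := fun k => K^(1-lam) * (Wk k)^lam with hckdef
  have hrk2 : ∀ k, 0 < rk k / 2 := fun k => by linarith [hrk0 k]
  have hWk0 : ∀ k, 0 ≤ Wk k := by
    intro k
    rw [hWkdef]
    have h1 : (0:ℝ) ≤ ((1+dd)*rk k)^β := Real.rpow_nonneg (by nlinarith [hrk0 k, hdd]) _
    have h2 : (0:ℝ) < (rk k/2)^((d:ℝ)-α) := Real.rpow_pos_of_pos (hrk2 k) _
    have h3 := hθ0 k
    positivity
  have hT20 : ∀ k, 0 ≤ T2 k := by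
    intro k
    rw [hT2def]
    have h1 : (0:ℝ) ≤ (rk k/2)^(α-(d:ℝ)) := Real.rpow_nonneg (hrk2 k).le _
    have h3 := hθ0 k
    positivity
  have hck0 : ∀ k, 0 ≤ ck k := by
    intro k
    rw [hckdef]
    exact mul_nonneg (Real.rpow_nonneg hK0 _) (Real.rpow_nonneg (hWk0 k) _)
  -- A k t is empty for large t
  have hAempty : ∀ k t, T2 k < t → A k t = ∅ := by
    intro k t hT2t
    rw [Set.eq_empty_iff_forall_notMem]
    rintro x ⟨hxQ, hlt⟩
    have hb : Hk k x ≤ ENNReal.ofReal ((rk k/2)^(α-(d:ℝ)) * F_r) := by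
      rw [ENNReal.ofReal_mul (Real.rpow_nonneg (hrk2 k).le _), ← hFF]
      exact mul_le_mul_right (setLIntegral_le_lintegral _ _) _
    have ht0 : 0 < t := lt_of_le_of_lt (hT20 k) hT2t
    have hreal : γ * θ k * t < (rk k/2)^(α-(d:ℝ)) * F_r := by
      have := lt_of_lt_of_le hlt hb
      rwa [ENNReal.ofReal_lt_ofReal_iff_of_nonneg
        (mul_nonneg (mul_nonneg hγ.le (hθ0 k).le) ht0.le)] at this
    have hto : t ≤ T2 k := by
      rw [hT2def]
      rw [le_div_iff₀ (mul_pos hγ (hθ0 k))]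
      nlinarith [hθ0 k]
    linarith
  -- covering estimate
  have hAW : ∀ k t, 0 < t → hContent d β (A k t) ≤ ENNReal.ofReal (Wk k / t) := by
    intro k t ht
    have hθk := hθ0 k
    set c' : ℝ := (rk k/2)^((d:ℝ)-α) with hc'def
    have hc' : 0 < c' := Real.rpow_pos_of_pos (hrk2 k) _
    set τ : ℝ := γ * θ k * t * c' with hτdef
    have hτ : 0 < τ := by positivity
    have hcc : ENNReal.ofReal c' * ENNReal.ofReal ((rk k/2)^(α-(d:ℝ))) = 1 := by
      rw [hc'def, ← ENNReal.ofReal_mul (Real.rpow_nonneg (hrk2 k).le _),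
        ← Real.rpow_add (hrk2 k)]
      rw [show (d:ℝ)-α+(α-(d:ℝ)) = (0:ℝ) by ring, Real.rpow_zero, ENNReal.ofReal_one]
    have hE : ∀ x ∈ A k t, ENNReal.ofReal τ < ∫⁻ y in Metric.ball x (rk k), g y := by
      rintro x ⟨hxQ, hlt⟩
      rw [hHkdef] at hlt
      simp only [] at hlt
      have hne0 : ENNReal.ofReal c' ≠ 0 := by simp [hc']
      have hnetop : ENNReal.ofReal c' ≠ ⊤ := ENNReal.ofReal_ne_top
      have hmul := (ENNReal.mul_lt_mul_iff_right hne0 hnetop).2 hlt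
      calc ENNReal.ofReal τ = ENNReal.ofReal c' * ENNReal.ofReal (γ * θ k * t) := by
            rw [← ENNReal.ofReal_mul hc'.le, hτdef]
            congr 1
            ring
        _ < ENNReal.ofReal c' * (ENNReal.ofReal ((rk k/2)^(α-(d:ℝ))) *
              ∫⁻ y in Metric.ball x (rk k), g y) := hmul
        _ = (ENNReal.ofReal c' * ENNReal.ofReal ((rk k/2)^(α-(d:ℝ)))) *
              ∫⁻ y in Metric.ball x (rk k), g y := (mul_assoc _ _ _).symm
        _ = ∫⁻ y in Metric.ball x (rk k), g y := by rw [hcc, one_mul]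
    have hcb := cover_bound hβ0 hmeasg (hrk0 k) hτ hE
    refine hcb.trans (le_of_eq ?_)
    rw [← hFdef, hFF]
    have h3d : ((3:ℝ≥0∞)^d) = ENNReal.ofReal ((3:ℝ)^d) := by
      rw [ENNReal.ofReal_pow (by norm_num)]
      congr 1
      simp [ENNReal.ofReal_ofNat]
    rw [h3d, ← ENNReal.ofReal_mul (by positivity), ← ENNReal.ofReal_mul (by positivity),
      ← ENNReal.ofReal_div_of_pos hτ]
    congr 1
    rw [hWkdef]
    simp only []
    rw [div_div]
    congr 1
    rw [hτdef, hc'def]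
    ring
  -- pointwise-in-t bound by the interpolated profile
  have hQsub : ∀ k t, A k t ⊆ Q := fun k t x hx => hx.1
  have hAle : ∀ k t, 0 < t → hContent d β (A k t) ≤
      (Set.Ioc (0:ℝ) (T2 k)).indicator (fun u => ENNReal.ofReal (ck k * u^(-lam))) t := by
    intro k t ht
    by_cases hcase : t ≤ T2 k
    · rw [Set.indicator_of_mem (Set.mem_Ioc.mpr ⟨ht, hcase⟩)]
      have h1 := hHK _ (hQsub k t)
      have h2 := hAW k t ht
      have hmono : Monotone ENNReal.ofReal := fun _ _ h => ENNReal.ofReal_le_ofReal h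
      have hmin : hContent d β (A k t) ≤ ENNReal.ofReal (min K (Wk k / t)) := by
        rw [hmono.map_min]
        exact le_min h1 h2
      refine hmin.trans (ENNReal.ofReal_le_ofReal ?_)
      calc min K (Wk k/t) ≤ K^(1-lam) * (Wk k/t)^lam :=
            min_le_rpow_interp hK0 (div_nonneg (hWk0 k) ht.le) hlam0.le hlam1.le
        _ = ck k * t^(-lam) := by
            rw [Real.div_rpow (hWk0 k) ht.le, Real.rpow_neg ht.le, hckdef]
            simp only []
            rw [div_eq_mul_inv, ← mul_assoc]
    · push_neg at hcase
      rw [hAempty k t hcase, hContent_empty (ne_of_gt hβ0)]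
      exact zero_le
  -- the per-scale integral bound
  have hJk : ∀ k, (∫⁻ t in Set.Ioi (0:ℝ), hContent d β (A k t)) ≤
      ENNReal.ofReal (ck k * (T2 k)^(1-lam)/(1-lam)) := by
    intro k
    calc (∫⁻ t in Set.Ioi (0:ℝ), hContent d β (A k t))
        ≤ ∫⁻ t in Set.Ioi (0:ℝ),
            (Set.Ioc (0:ℝ) (T2 k)).indicator (fun u => ENNReal.ofReal (ck k * u^(-lam))) t := by
          apply lintegral_mono_ae
          filter_upwards [ae_restrict_mem measurableSet_Ioi] with t ht
          exact hAle k t ht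
      _ = ∫⁻ t in Set.Ioc (0:ℝ) (T2 k), ENNReal.ofReal (ck k * t^(-lam)) := by
          rw [lintegral_indicator measurableSet_Ioc,
            Measure.restrict_restrict measurableSet_Ioc]
          congr 1
          rw [Set.inter_eq_self_of_subset_left (fun u hu => hu.1)]
      _ ≤ _ := lint_rpow (hck0 k) (hT20 k) hlam0 hlam1
  -- algebraic identities
  have hq2 : ∀ k : ℕ, ((1/2:ℝ)^k)^e = q^k * q^k := by
    intro k
    have l1 : ((1/2:ℝ)^k : ℝ)^e = (1/2:ℝ)^((k:ℝ)*e) := by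
      rw [← Real.rpow_natCast (1/2:ℝ) k, ← Real.rpow_mul (by norm_num)]
    have l2 : (q^k : ℝ) = (1/2:ℝ)^((e/2)*(k:ℝ)) := by
      rw [hqdef, ← Real.rpow_natCast ((1/2:ℝ)^(e/2)) k, ← Real.rpow_mul (by norm_num)]
    rw [l1, l2, ← Real.rpow_add (by norm_num)]
    congr 1
    ring
  have hrke : ∀ k, (rk k)^e = D^e * (q^k * q^k) := by
    intro k
    rw [hrkdef]
    simp only []
    rw [Real.mul_rpow hD.le (by positivity), hq2 k]
  have hW1 : ∀ k, Wk k = cA * F_r * (rk k)^(β+α-(d:ℝ)) / θ k := by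
    intro k
    have hθk := (hθ0 k).ne'
    have hrkk := hrk0 k
    have h2ne : ((2:ℝ)^((d:ℝ)-α)) ≠ 0 := h2pow.ne'
    have hrne : (rk k)^((d:ℝ)-α) ≠ 0 := (Real.rpow_pos_of_pos hrkk _).ne'
    have hγne := hγ.ne'
    rw [hWkdef, hcAdef]
    simp only []
    rw [Real.mul_rpow (by linarith) hrkk.le]
    rw [Real.div_rpow hrkk.le (by norm_num : (0:ℝ) ≤ 2)]
    rw [show β+α-(d:ℝ) = β - ((d:ℝ)-α) by ring, Real.rpow_sub hrkk β ((d:ℝ)-α)]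
    generalize ((1:ℝ)+dd)^β = A1
    generalize (rk k)^β = U
    generalize hV : (rk k)^((d:ℝ)-α) = V at hrne ⊢
    generalize hW2g : (2:ℝ)^((d:ℝ)-α) = W2 at h2ne ⊢
    generalize hTh : θ k = Th at hθk ⊢
    generalize hGg : γ = G at hγne ⊢
    field_simp
  have hT1 : ∀ k, T2 k = cB * F_r * (rk k)^(α-(d:ℝ)) / θ k := by
    intro k
    have hθk := (hθ0 k).ne'
    have hrkk := hrk0 k
    have h2ne : ((2:ℝ)^((d:ℝ)-α)) ≠ 0 := h2pow.ne'
    have hγne := hγ.ne'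
    rw [hT2def, hcBdef]
    simp only []
    rw [Real.div_rpow hrkk.le (by norm_num : (0:ℝ) ≤ 2)]
    rw [show (2:ℝ)^(α-(d:ℝ)) = ((2:ℝ)^((d:ℝ)-α))⁻¹ by
      rw [← Real.rpow_neg (by norm_num)]
      congr 1
      ring]
    generalize (rk k)^(α-(d:ℝ)) = U
    generalize hW2g : (2:ℝ)^((d:ℝ)-α) = W2 at h2ne ⊢
    generalize hTh : θ k = Th at hθk ⊢
    generalize hGg : γ = G at hγne ⊢
    field_simp
  set P : ℝ := K^(1-lam) * cA^lam * cB^(1-lam) * F_r * D^e / ((1-lam)*(1-q)) with hPdef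
  have hP0 : 0 ≤ P := by
    have h1 : (0:ℝ) ≤ K^(1-lam) := Real.rpow_nonneg hK0 _
    have h2 : (0:ℝ) ≤ cA^lam := Real.rpow_nonneg hcA.le _
    have h3 : (0:ℝ) ≤ cB^(1-lam) := Real.rpow_nonneg hcB.le _
    have h4 : (0:ℝ) ≤ D^e := Real.rpow_nonneg hD.le _
    have h5 : (0:ℝ) < 1 - lam := by linarith
    rw [hPdef]
    positivity
  have hkey : ∀ k, ck k * (T2 k)^(1-lam)/(1-lam) = P * q^k := by
    intro k
    have hθk := hθ0 k
    have hrkk := hrk0 k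
    have hqk : (0:ℝ) < q^k := by positivity
    have hexp : ∀ (c u p : ℝ), 0 ≤ c → 0 ≤ u →
        (c * F_r * u / θ k) ^ p = c^p * F_r^p * u^p / (θ k)^p := by
      intro c u p hc hu
      rw [Real.div_rpow (by positivity) hθk.le, Real.mul_rpow (by positivity) hu,
        Real.mul_rpow hc hFr0]
    have hFr2 : F_r^lam * F_r^(1-lam) = F_r := by
      rw [← Real.rpow_add' hFr0 (by norm_num : lam + (1-lam) ≠ 0)]
      rw [show lam + (1-lam) = (1:ℝ) by ring, Real.rpow_one]
    have hθ2 : (θ k)^lam * (θ k)^(1-lam) = θ k := by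
      rw [← Real.rpow_add hθk]
      rw [show lam + (1-lam) = (1:ℝ) by ring, Real.rpow_one]
    have hrkcomb : ((rk k)^(β+α-(d:ℝ)))^lam * ((rk k)^(α-(d:ℝ)))^(1-lam) = (rk k)^e := by
      rw [← Real.rpow_mul hrkk.le, ← Real.rpow_mul hrkk.le, ← Real.rpow_add hrkk]
      congr 1
      rw [hedef]
      ring
    rw [hckdef]
    simp only []
    rw [hW1 k, hT1 k]
    rw [hexp _ _ _ hcA.le (Real.rpow_nonneg hrkk.le _),
      hexp _ _ _ hcB.le (Real.rpow_nonneg hrkk.le _)]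
    have hstep : K^(1-lam) * (cA^lam * F_r^lam * ((rk k)^(β+α-(d:ℝ)))^lam / (θ k)^lam) *
        (cB^(1-lam) * F_r^(1-lam) * ((rk k)^(α-(d:ℝ)))^(1-lam) / (θ k)^(1-lam))
        = K^(1-lam) * cA^lam * cB^(1-lam) * (F_r^lam * F_r^(1-lam)) *
          (((rk k)^(β+α-(d:ℝ)))^lam * ((rk k)^(α-(d:ℝ)))^(1-lam)) /
          ((θ k)^lam * (θ k)^(1-lam)) := by
      field_simp
    have hθkk : θ k = (1-q)*q^k := rfl
    have hqkne : (q:ℝ)^k ≠ 0 := hqk.ne'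
    have h1qne : (1:ℝ)-q ≠ 0 := hq1'.ne'
    have h1lamne : (1:ℝ)-lam ≠ 0 := by
      intro h; rw [sub_eq_zero] at h; exact absurd h.symm (ne_of_lt hlam1)
    rw [hstep, hFr2, hθ2, hrkcomb, hrke k, hθkk, hPdef]
    generalize K^((1:ℝ)-lam) = X1
    generalize cA^lam = X2
    generalize cB^((1:ℝ)-lam) = X3
    generalize D^e = X4
    generalize hqg : (q:ℝ)^k = qk at hqkne ⊢
    generalize hq1g : (1:ℝ)-q = s1 at h1qne ⊢
    generalize hl1g : (1:ℝ)-lam = s2 at h1lamne ⊢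
    field_simp
  -- summation over scales
  have hchain1 : choquet d (hContent d β) Q (fun y => |rieszR d α f y|)
      ≤ ∑' k : ℕ, ∫⁻ t in Set.Ioi (0:ℝ), hContent d β (A k t) := by
    rw [choquet]
    calc ∫⁻ t in Set.Ioi (0:ℝ), hContent d β {x | x ∈ Q ∧ t < |rieszR d α f x|}
        ≤ ∫⁻ t in Set.Ioi (0:ℝ), ∑' k, hContent d β (A k t) := by
          apply lintegral_mono_ae
          filter_upwards [ae_restrict_mem measurableSet_Ioi] with t ht
          calc hContent d β {x | x ∈ Q ∧ t < |rieszR d α f x|}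
              ≤ hContent d β (⋃ k, A k t) := hContent_mono (hincl t ht)
            _ ≤ ∑' k, hContent d β (A k t) := hContent_iUnion_le _
      _ = ∑' k, ∫⁻ t in Set.Ioi (0:ℝ), hContent d β (A k t) :=
          lintegral_tsum (fun k => ((hAmono k).measurable).aemeasurable)
  have hchain2 : (∑' k : ℕ, ∫⁻ t in Set.Ioi (0:ℝ), hContent d β (A k t))
      ≤ ENNReal.ofReal (P * (1-q)⁻¹) := by
    calc (∑' k : ℕ, ∫⁻ t in Set.Ioi (0:ℝ), hContent d β (A k t))
        ≤ ∑' k : ℕ, ENNReal.ofReal (ck k * (T2 k)^(1-lam)/(1-lam)) :=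
          ENNReal.tsum_le_tsum hJk
      _ = ∑' k : ℕ, ENNReal.ofReal (P * q^k) := by
          congr 1
          funext k
          rw [hkey k]
      _ = ENNReal.ofReal P * ∑' k : ℕ, (ENNReal.ofReal q)^k := by
          rw [← ENNReal.tsum_mul_left]
          congr 1
          funext k
          rw [ENNReal.ofReal_mul hP0, ENNReal.ofReal_pow hq0.le]
      _ = ENNReal.ofReal P * (1 - ENNReal.ofReal q)⁻¹ := by
          rw [ENNReal.tsum_geometric]
      _ = ENNReal.ofReal (P * (1-q)⁻¹) := by
          rw [show (1:ℝ≥0∞) - ENNReal.ofReal q = ENNReal.ofReal (1-q) by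
            rw [ENNReal.ofReal_sub _ hq0.le, ENNReal.ofReal_one]]
          rw [← ENNReal.ofReal_inv_of_pos hq1', ← ENNReal.ofReal_mul hP0]
  -- conversion to the final form
  have hFM' : F ≤ M * ENNReal.ofReal ((2*l)^((d:ℝ)-α)) := by
    have h1 : ENNReal.ofReal ((2*l)^(α-(d:ℝ))) * ENNReal.ofReal ((2*l)^((d:ℝ)-α)) = 1 := by
      rw [← ENNReal.ofReal_mul (Real.rpow_nonneg (by linarith) _),
        ← Real.rpow_add (by linarith)]
      rw [show α-(d:ℝ)+((d:ℝ)-α) = (0:ℝ) by ring, Real.rpow_zero, ENNReal.ofReal_one]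
    calc F = F * (ENNReal.ofReal ((2*l)^(α-(d:ℝ))) * ENNReal.ofReal ((2*l)^((d:ℝ)-α))) := by
          rw [h1, mul_one]
      _ = (F * ENNReal.ofReal ((2*l)^(α-(d:ℝ)))) * ENNReal.ofReal ((2*l)^((d:ℝ)-α)) := by
          rw [mul_assoc]
      _ ≤ M * ENNReal.ofReal ((2*l)^((d:ℝ)-α)) := mul_le_mul_left hFM _
  have hfinal : P * (1-q)⁻¹ = (C / (2:ℝ)^((d:ℝ)-α)) * l^(β+α-(d:ℝ)) * F_r := by
    have hKexp : K^(1-lam) = ω^(1-lam) * (l^(β*(1-lam)) * dd^(β*(1-lam))) := by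
      rw [hKdef, Real.mul_rpow hω.le (Real.rpow_nonneg (by positivity) _),
        ← Real.rpow_mul (mul_nonneg hl.le hdd.le), Real.mul_rpow hl.le hdd.le]
    have hDexp : D^e = l^e * (2*dd)^e := by
      rw [hDdef, show 2*l*dd = l*(2*dd) by ring, Real.mul_rpow hl.le (by positivity)]
    have hlcomb : l^(β*(1-lam)) * l^e = l^(β+α-(d:ℝ)) := by
      rw [← Real.rpow_add hl]
      congr 1
      rw [hedef]
      ring
    have h2ne : ((2:ℝ)^((d:ℝ)-α)) ≠ 0 := h2pow.ne'
    have h1qne : (1:ℝ)-q ≠ 0 := hq1'.ne'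
    have h1lamne : (1:ℝ)-lam ≠ 0 := by
      intro h; rw [sub_eq_zero] at h; exact absurd h.symm (ne_of_lt hlam1)
    rw [hPdef, hCdef, hKexp, hDexp, ← hlcomb]
    generalize ω^((1:ℝ)-lam) = a1
    generalize dd^(β*((1:ℝ)-lam)) = a2
    generalize cA^lam = a3
    generalize cB^((1:ℝ)-lam) = a4
    generalize ((2:ℝ)*dd)^e = a5
    generalize l^(β*((1:ℝ)-lam)) = b1
    generalize l^e = b2
    generalize hW2g : (2:ℝ)^((d:ℝ)-α) = W2 at h2ne ⊢
    generalize hq1g : (1:ℝ)-q = s1 at h1qne ⊢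
    generalize hl1g : (1:ℝ)-lam = s2 at h1lamne ⊢
    field_simp
  calc choquet d (hContent d β) Q (fun y => |rieszR d α f y|)
      ≤ ENNReal.ofReal (P * (1-q)⁻¹) := hchain1.trans hchain2
    _ = ENNReal.ofReal ((C / (2:ℝ)^((d:ℝ)-α)) * l^(β+α-(d:ℝ))) * ENNReal.ofReal F_r := by
        rw [hfinal, ENNReal.ofReal_mul (mul_nonneg (div_nonneg hC.le h2pow.le) (Real.rpow_nonneg hl.le _))]
    _ ≤ ENNReal.ofReal ((C / (2:ℝ)^((d:ℝ)-α)) * l^(β+α-(d:ℝ))) *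
          (M * ENNReal.ofReal ((2*l)^((d:ℝ)-α))) := by
        apply mul_le_mul_right
        rw [← hFF]
        exact hFM'
    _ = ENNReal.ofReal ((C / (2:ℝ)^((d:ℝ)-α)) * l^(β+α-(d:ℝ)) * (2*l)^((d:ℝ)-α)) * M := by
        rw [ENNReal.ofReal_mul (mul_nonneg (div_nonneg hC.le h2pow.le) (Real.rpow_nonneg hl.le _))]
        ring
    _ = ENNReal.ofReal (C * l^β) * M := by
        congr 1
        have hll : l^(β+α-(d:ℝ)) * l^((d:ℝ)-α) = l^β := by
          rw [← Real.rpow_add hl]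
          congr 1
          ring
        have h2ne : ((2:ℝ)^((d:ℝ)-α)) ≠ 0 := h2pow.ne'
        rw [Real.mul_rpow (by norm_num : (0:ℝ) ≤ 2) hl.le, ← hll]
        generalize l^(β+α-(d:ℝ)) = b1
        generalize l^((d:ℝ)-α) = b2
        generalize hW2g : (2:ℝ)^((d:ℝ)-α) = W2 at h2ne ⊢
        generalize hCg : C = C₂
        congr 1
        field_simp
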